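/- Let K be a field and m, n positive integers. With R = K[A,B,C,D,T]/I as above (I generated by the 2×2 minors of the matrix with rows (A²+T^m, B, D), (C, A², B^n - D)), the element t is a nonzerodivisor on R. -/

import Mathlib

open MvPolynomial

namespace Stmt9Aux

/-- Koszul syzygy for a coprime pair in a domain. -/
lemma koszul {R : Type*} [CommRing R] [IsDomain R] {p q : R} (hp : Prime p) (hnd : ¬ p ∣ q)
    (a b : R) (h : a * p + b * q = 0) : ∃ w, a = q * w ∧ b = -(p * w) := by
  have hdvd : p ∣ b * q := ⟨-a, by linear_combination h⟩
  rcases hp.2.2 b q hdvd with hb | hq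
  · obtain ⟨w, rfl⟩ := hb
    refine ⟨-w, ?_, by ring⟩
    have : a * p = (q * -w) * p := by ring_nf; linear_combination h
    exact mul_right_cancel₀ hp.ne_zero this
  · exact absurd hq hnd

/-- A linear polynomial with coprime coefficients over a UFD is prime. -/
lemma prime_lin {R : Type*} [CommRing R] [IsDomain R] [UniqueFactorizationMonoid R]
    (u v : R) (hv : v ≠ 0) (h : ∀ d : R, d ∣ u → d ∣ v → IsUnit d) :
    Prime (Polynomial.C v * Polynomial.X + Polynomial.C u) := by
  rw [← UniqueFactorizationMonoid.irreducible_iff_prime]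
  have hdeg : (Polynomial.C v * Polynomial.X + Polynomial.C u).degree = 1 :=
    Polynomial.degree_linear hv
  have hq0 : (Polynomial.C v * Polynomial.X + Polynomial.C u) ≠ 0 := by
    intro h0; rw [h0, Polynomial.degree_zero] at hdeg; simp at hdeg
  constructor
  · intro hu'
    rw [Polynomial.degree_eq_zero_of_isUnit hu'] at hdeg
    simp at hdeg
  · intro f g hfg
    have hf0 : f ≠ 0 := by rintro rfl; rw [zero_mul] at hfg; exact hq0 hfg
    have hg0 : g ≠ 0 := by rintro rfl; rw [mul_zero] at hfg; exact hq0 hfg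
    have hnat : f.natDegree + g.natDegree = 1 := by
      have h2 := Polynomial.natDegree_mul hf0 hg0
      rw [← hfg, Polynomial.natDegree_linear hv] at h2
      exact h2.symm
    have hcases : f.natDegree = 0 ∨ g.natDegree = 0 := by omega
    rcases hcases with h0 | h0
    · obtain ⟨r, hr⟩ := Polynomial.natDegree_eq_zero.mp h0
      left
      rw [← hr]
      apply Polynomial.isUnit_C.mpr
      apply h r
      · have hco := congrArg (fun p => Polynomial.coeff p 0) hfg
        simp only [← hr] at hco
        simp at hco
        exact ⟨g.coeff 0, by linear_combination hco⟩
      · have hco := congrArg (fun p => Polynomial.coeff p 1) hfg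
        simp only [← hr] at hco
        simp at hco
        exact ⟨g.coeff 1, by linear_combination hco⟩
    · obtain ⟨r, hr⟩ := Polynomial.natDegree_eq_zero.mp h0
      right
      rw [← hr]
      apply Polynomial.isUnit_C.mpr
      apply h r
      · have hco := congrArg (fun p => Polynomial.coeff p 0) hfg
        simp only [← hr] at hco
        simp at hco
        exact ⟨f.coeff 0, by linear_combination hco⟩
      · have hco := congrArg (fun p => Polynomial.coeff p 1) hfg
        simp only [← hr] at hco
        simp at hco
        exact ⟨f.coeff 1, by linear_combination hco⟩

variable (K : Type) [Field K]

lemma prime_X0 : Prime (X 0 : MvPolynomial (Fin 4) K) := by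
  have h1 : Prime ((finSuccEquiv K 3) (X 0)) := by
    rw [finSuccEquiv_X_zero]; exact Polynomial.prime_X
  exact (MulEquiv.prime_iff (finSuccEquiv K 3).toMulEquiv).mp h1

lemma not_X0_dvd_X1 : ¬ ((X 0 : MvPolynomial (Fin 4) K) ∣ X 1) := by
  rintro ⟨q, hq⟩
  have := congrArg (aeval (fun i : Fin 4 => if i = 0 then (0 : K) else 1)) hq
  simp at this

/-- `A⁴ - BC` is prime in `K[A,B,C,D,T]`. -/
lemma prime_h1 : Prime ((X 0 : MvPolynomial (Fin 5) K) ^ 4 - X 1 * X 2) := by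
  set e := (renameEquiv K (Equiv.swap (0 : Fin 5) 2)).trans (finSuccEquiv K 4) with he
  have key : e ((X 0 : MvPolynomial (Fin 5) K) ^ 4 - X 1 * X 2)
      = Polynomial.C (-(X 0 : MvPolynomial (Fin 4) K)) * Polynomial.X
        + Polynomial.C ((X 1 : MvPolynomial (Fin 4) K) ^ 4) := by
    have e0 : e (X 0 : MvPolynomial (Fin 5) K) = Polynomial.C (X 1) := by
      rw [he, AlgEquiv.trans_apply, renameEquiv_apply, rename_X, Equiv.swap_apply_left]
      rw [show (2 : Fin 5) = Fin.succ 1 by decide, finSuccEquiv_X_succ]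
    have e1 : e (X 1 : MvPolynomial (Fin 5) K) = Polynomial.C (X 0) := by
      rw [he, AlgEquiv.trans_apply, renameEquiv_apply, rename_X,
        Equiv.swap_apply_of_ne_of_ne (by decide) (by decide)]
      rw [show (1 : Fin 5) = Fin.succ 0 by decide, finSuccEquiv_X_succ]
    have e2 : e (X 2 : MvPolynomial (Fin 5) K) = Polynomial.X := by
      rw [he, AlgEquiv.trans_apply, renameEquiv_apply, rename_X, Equiv.swap_apply_right]
      rw [finSuccEquiv_X_zero]
    rw [map_sub, map_pow, map_mul, e0, e1, e2, ← Polynomial.C_pow, map_neg]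
    ring
  have hp : Prime (e ((X 0 : MvPolynomial (Fin 5) K) ^ 4 - X 1 * X 2)) := by
    rw [key]
    apply prime_lin
    · exact neg_ne_zero.mpr (X_ne_zero 0)
    · intro d hdu hdv
      rw [dvd_neg] at hdv
      obtain ⟨q, hq⟩ := hdv
      rcases (prime_X0 K).irreducible.isUnit_or_isUnit hq with h | h
      · exact h
      · exfalso
        have hX0d : (X 0 : MvPolynomial (Fin 4) K) ∣ d := by
          refine ⟨(↑h.unit⁻¹ : _), ?_⟩
          rw [hq, mul_assoc]
          simp
        have : (X 0 : MvPolynomial (Fin 4) K) ∣ X 1 := by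
          have h4 : (X 0 : MvPolynomial (Fin 4) K) ∣ (X 1) ^ 4 := hX0d.trans hdu
          exact (prime_X0 K).dvd_of_dvd_pow h4
        exact not_X0_dvd_X1 K this
  exact (MulEquiv.prime_iff e.toMulEquiv).mp hp
noncomputable def σ : MvPolynomial (Fin 5) K →ₐ[K] MvPolynomial (Fin 5) K :=
  aeval (fun i : Fin 5 => if i = 4 then 0 else X i)

variable {K}

lemma σ_X_ne (i : Fin 5) (h : i ≠ 4) : σ K (X i) = X i := by
  simp [σ, h]

lemma σ_X4 : σ K (X 4) = 0 := by simp [σ]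

lemma σ_idem (p : MvPolynomial (Fin 5) K) : σ K (σ K p) = σ K p := by
  have h : (σ K).comp (σ K) = σ K := by
    apply MvPolynomial.algHom_ext
    intro i
    by_cases h : i = 4
    · subst h; simp [σ]
    · simp [σ, h]
  exact DFunLike.congr_fun h p

lemma X4_dvd_sub_σ (p : MvPolynomial (Fin 5) K) : (X 4 : MvPolynomial (Fin 5) K) ∣ p - σ K p := by
  induction p using MvPolynomial.induction_on with
  | C a => simp [σ]
  | add p q hp hq =>
      have := dvd_add hp hq
      rw [map_add]
      have heq : p + q - (σ K p + σ K q) = p - σ K p + (q - σ K q) := by ring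
      rw [heq]; exact this
  | mul_X p i hp =>
      by_cases h : i = 4
      · subst h
        rw [map_mul, σ_X4, mul_zero, sub_zero]
        exact dvd_mul_left _ _
      · have heq : p * X i - σ K (p * X i) = (p - σ K p) * X i := by
          rw [map_mul, σ_X_ne i h]; ring
        rw [heq]; exact hp.mul_right _

lemma σ_zero_dvd (p : MvPolynomial (Fin 5) K) (h : σ K p = 0) :
    (X 4 : MvPolynomial (Fin 5) K) ∣ p := by
  simpa [h] using X4_dvd_sub_σ p

lemma not_h1_dvd_h3 (n : ℕ) :
    ¬ ((X 0 : MvPolynomial (Fin 5) K) ^ 4 - X 1 * X 2 ∣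
        X 1 * (X 1 ^ n - X 3) - (X 0 ^ 2) * X 3) := by
  rintro ⟨q, hq⟩
  have := congrArg (aeval (fun i : Fin 5 => if i = 1 then (X 1 : MvPolynomial (Fin 5) K) else 0)) hq
  simp at this

/-- The syzygy lemma at T = 0: any syzygy of (h1, h2, h3) is a combination of the two
row syzygies. -/
lemma lemA (n : ℕ) (a b c : MvPolynomial (Fin 5) K)
    (h : a * ((X 0 : MvPolynomial (Fin 5) K) ^ 4 - X 1 * X 2)
        + b * ((X 0 : MvPolynomial (Fin 5) K) ^ 2 * (X 1 ^ n - X 3) - X 2 * X 3)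
        + c * ((X 1 : MvPolynomial (Fin 5) K) * (X 1 ^ n - X 3) - (X 0 ^ 2) * X 3) = 0) :
    ∃ α β : MvPolynomial (Fin 5) K,
      a = X 3 * α + (X 1 ^ n - X 3) * β ∧
      b = -(X 1 * α) - X 0 ^ 2 * β ∧
      c = X 0 ^ 2 * α + X 2 * β := by
  set h1 : MvPolynomial (Fin 5) K := X 0 ^ 4 - X 1 * X 2 with hh1
  set h3 : MvPolynomial (Fin 5) K := X 1 * (X 1 ^ n - X 3) - (X 0 ^ 2) * X 3 with hh3
  have hp : Prime h1 := prime_h1 K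
  have hnd : ¬ h1 ∣ h3 := not_h1_dvd_h3 n
  have E1 : (X 1 * a + X 3 * b) * h1 + (X 0 ^ 2 * b + X 1 * c) * h3 = 0 := by
    rw [hh1, hh3]; linear_combination (X 1 : MvPolynomial (Fin 5) K) * h
  have E2 : (X 0 ^ 2 * a + (X 1 ^ n - X 3) * b) * h1 + (X 2 * b + X 0 ^ 2 * c) * h3 = 0 := by
    rw [hh1, hh3]; linear_combination ((X 0 : MvPolynomial (Fin 5) K) ^ 2) * h
  obtain ⟨w1, e11, e12⟩ := koszul hp hnd _ _ E1
  obtain ⟨w2, e21, e22⟩ := koszul hp hnd _ _ E2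
  have hc : c = X 2 * w1 - X 0 ^ 2 * w2 := by
    have hcc : h1 * c = h1 * (X 2 * w1 - X 0 ^ 2 * w2) := by
      rw [hh1]
      linear_combination (-(X 2 : MvPolynomial (Fin 5) K)) * e12
        + ((X 0 : MvPolynomial (Fin 5) K) ^ 2) * e22
    exact mul_left_cancel₀ hp.ne_zero hcc
  have hb : b = X 1 * w2 - X 0 ^ 2 * w1 := by
    have hbb : (X 0 : MvPolynomial (Fin 5) K) ^ 2 * b
        = X 0 ^ 2 * (X 1 * w2 - X 0 ^ 2 * w1) := by
      linear_combination e12 + (-(X 1 : MvPolynomial (Fin 5) K)) * hc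
    exact mul_left_cancel₀ (pow_ne_zero 2 (X_ne_zero 0)) hbb
  have ha : a = (X 1 ^ n - X 3) * w1 - X 3 * w2 := by
    have haa : (X 1 : MvPolynomial (Fin 5) K) * a
        = X 1 * ((X 1 ^ n - X 3) * w1 - X 3 * w2) := by
      rw [hh3] at e11
      linear_combination e11 + (-(X 3 : MvPolynomial (Fin 5) K)) * hb
    exact mul_left_cancel₀ (X_ne_zero 1) haa
  exact ⟨-w2, w1, by linear_combination ha, by linear_combination hb, by linear_combination hc⟩

/-- Main step: if `f * T ∈ I` then `f ∈ I`. -/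
lemma key (m n : ℕ) (hm : 0 < m) (f : MvPolynomial (Fin 5) K)
    (h : f * X 4 ∈ Ideal.span
      ({ (X 0 ^ 2) * (X 0 ^ 2 + X 4 ^ m) - X 1 * X 2,
        (X 0 ^ 2 + X 4 ^ m) * (X 1 ^ n - X 3) - X 2 * X 3,
        X 1 * (X 1 ^ n - X 3) - (X 0 ^ 2) * X 3 } : Set (MvPolynomial (Fin 5) K))) :
    f ∈ Ideal.span
      ({ (X 0 ^ 2) * (X 0 ^ 2 + X 4 ^ m) - X 1 * X 2,
        (X 0 ^ 2 + X 4 ^ m) * (X 1 ^ n - X 3) - X 2 * X 3,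
        X 1 * (X 1 ^ n - X 3) - (X 0 ^ 2) * X 3 } : Set (MvPolynomial (Fin 5) K)) := by
  set g1 : MvPolynomial (Fin 5) K := (X 0 ^ 2) * (X 0 ^ 2 + X 4 ^ m) - X 1 * X 2 with hg1
  set g2 : MvPolynomial (Fin 5) K := (X 0 ^ 2 + X 4 ^ m) * (X 1 ^ n - X 3) - X 2 * X 3 with hg2
  set g3 : MvPolynomial (Fin 5) K := X 1 * (X 1 ^ n - X 3) - (X 0 ^ 2) * X 3 with hg3
  have s0 : σ K (X 0) = X 0 := σ_X_ne 0 (by decide)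
  have s1 : σ K (X 1) = X 1 := σ_X_ne 1 (by decide)
  have s2 : σ K (X 2) = X 2 := σ_X_ne 2 (by decide)
  have s3 : σ K (X 3) = X 3 := σ_X_ne 3 (by decide)
  have s4 : σ K (X 4) = (0 : MvPolynomial (Fin 5) K) := σ_X4
  -- extract a representation
  rw [Ideal.mem_span_insert] at h
  obtain ⟨a, z, hz, hrep⟩ := h
  rw [Ideal.mem_span_insert] at hz
  obtain ⟨b, w, hw, hzeq⟩ := hz
  rw [Ideal.mem_span_singleton'] at hw
  obtain ⟨c, hc⟩ := hw
  have hrep2 : f * X 4 = a * g1 + b * g2 + c * g3 := by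
    rw [hrep, hzeq, ← hc]; ring
  -- apply σ
  have sg1 : σ K g1 = X 0 ^ 4 - X 1 * X 2 := by
    rw [hg1]; simp only [map_sub, map_add, map_neg, map_mul, map_pow, s0, s1, s2, s3, s4, σ_idem, zero_pow hm.ne']; ring
  have sg2 : σ K g2 = X 0 ^ 2 * (X 1 ^ n - X 3) - X 2 * X 3 := by
    rw [hg2]; simp only [map_sub, map_add, map_neg, map_mul, map_pow, s0, s1, s2, s3, s4, σ_idem, zero_pow hm.ne']; ring
  have sg3 : σ K g3 = X 1 * (X 1 ^ n - X 3) - (X 0 ^ 2) * X 3 := by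
    rw [hg3]; simp only [map_sub, map_add, map_neg, map_mul, map_pow, s0, s1, s2, s3, s4, σ_idem, zero_pow hm.ne']
  have hσ : σ K a * ((X 0 : MvPolynomial (Fin 5) K) ^ 4 - X 1 * X 2)
      + σ K b * ((X 0 : MvPolynomial (Fin 5) K) ^ 2 * (X 1 ^ n - X 3) - X 2 * X 3)
      + σ K c * ((X 1 : MvPolynomial (Fin 5) K) * (X 1 ^ n - X 3) - (X 0 ^ 2) * X 3) = 0 := by
    have h5 := congrArg (σ K) hrep2
    rw [map_mul, map_add, map_add, map_mul, map_mul, map_mul, sg1, sg2, sg3, s4, mul_zero] at h5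
    linear_combination -h5
  obtain ⟨α, β, hA, hB, hC⟩ := lemA n (σ K a) (σ K b) (σ K c) hσ
  -- replace α β by their σ-images
  have hA' : σ K a = X 3 * σ K α + (X 1 ^ n - X 3) * σ K β := by
    have h5 := congrArg (σ K) hA
    rw [σ_idem] at h5; simp only [map_sub, map_add, map_neg, map_mul, map_pow, s0, s1, s2, s3, s4, σ_idem, zero_pow hm.ne'] at h5; exact h5
  have hB' : σ K b = -(X 1 * σ K α) - X 0 ^ 2 * σ K β := by
    have h5 := congrArg (σ K) hB
    rw [σ_idem] at h5; simp only [map_sub, map_add, map_neg, map_mul, map_pow, s0, s1, s2, s3, s4, σ_idem, zero_pow hm.ne'] at h5; exact h5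
  have hC' : σ K c = X 0 ^ 2 * σ K α + X 2 * σ K β := by
    have h5 := congrArg (σ K) hC
    rw [σ_idem] at h5; simp only [map_sub, map_add, map_neg, map_mul, map_pow, s0, s1, s2, s3, s4, σ_idem, zero_pow hm.ne'] at h5; exact h5
  -- the corrected coefficients are divisible by X 4
  have da : (X 4 : MvPolynomial (Fin 5) K) ∣ a - (X 3 * σ K α + (X 1 ^ n - X 3) * σ K β) := by
    apply σ_zero_dvd
    simp only [map_sub, map_add, map_neg, map_mul, map_pow, s0, s1, s2, s3, s4, σ_idem, zero_pow hm.ne']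
    linear_combination hA'
  have db : (X 4 : MvPolynomial (Fin 5) K) ∣ b - (-(X 1 * σ K α) - X 0 ^ 2 * σ K β) := by
    apply σ_zero_dvd
    simp only [map_sub, map_add, map_neg, map_mul, map_pow, s0, s1, s2, s3, s4, σ_idem, zero_pow hm.ne']
    linear_combination hB'
  have dc : (X 4 : MvPolynomial (Fin 5) K) ∣
      c - ((X 0 ^ 2 + X 4 ^ m) * σ K α + X 2 * σ K β) := by
    apply σ_zero_dvd
    simp only [map_sub, map_add, map_neg, map_mul, map_pow, s0, s1, s2, s3, s4, σ_idem, zero_pow hm.ne']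
    linear_combination hC'
  obtain ⟨a1, ha1⟩ := da
  obtain ⟨b1, hb1⟩ := db
  obtain ⟨c1, hc1⟩ := dc
  -- the two row syzygies
  have S1 : X 3 * g1 - X 1 * g2 + (X 0 ^ 2 + X 4 ^ m) * g3 = 0 := by
    rw [hg1, hg2, hg3]; ring
  have S2 : (X 1 ^ n - X 3) * g1 - X 0 ^ 2 * g2 + X 2 * g3 = 0 := by
    rw [hg1, hg2, hg3]; ring
  have final : X 4 * f = X 4 * (a1 * g1 + b1 * g2 + c1 * g3) := by
    linear_combination hrep2 + g1 * ha1 + g2 * hb1 + g3 * hc1 + σ K α * S1 + σ K β * S2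
  have hf : f = a1 * g1 + b1 * g2 + c1 * g3 := mul_left_cancel₀ (X_ne_zero 4) final
  rw [Ideal.mem_span_insert]
  refine ⟨a1, b1 * g2 + c1 * g3, ?_, by rw [hf]; ring⟩
  rw [Ideal.mem_span_insert]
  exact ⟨b1, c1 * g3, Ideal.mem_span_singleton'.mpr ⟨c1, rfl⟩, rfl⟩

end Stmt9Aux

open Stmt9Aux in
/-- t is a nonzerodivisor on R = K[A,B,C,D,T]/I
(variables 0=A, 1=B, 2=C, 3=D, 4=T). -/
theorem stmt9 (K : Type) [Field K] (m n : ℕ) (hm : 0 < m) (hn : 0 < n)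
    (I : Ideal (MvPolynomial (Fin 5) K))
    (hI : I = Ideal.span
      { (X 0 ^ 2) * (X 0 ^ 2 + X 4 ^ m) - X 1 * X 2,
        (X 0 ^ 2 + X 4 ^ m) * (X 1 ^ n - X 3) - X 2 * X 3,
        X 1 * (X 1 ^ n - X 3) - (X 0 ^ 2) * X 3 })
    (t : MvPolynomial (Fin 5) K ⧸ I) (ht : t = Ideal.Quotient.mk I (X 4)) :
    t ∈ nonZeroDivisors (MvPolynomial (Fin 5) K ⧸ I) := by
  rw [mem_nonZeroDivisors_iff_right]
  intro x hx
  obtain ⟨f, rfl⟩ := Ideal.Quotient.mk_surjective x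
  rw [ht, ← map_mul, Ideal.Quotient.eq_zero_iff_mem, hI] at hx
  rw [Ideal.Quotient.eq_zero_iff_mem, hI]
  exact key m n hm f hx
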